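/- Let (X,d) be a complete metric space, η : [0,∞) → ℝ with η(0) = 0, and φ : X → ℝ lower semicontinuous. Assume there exist x₀ ∈ X and reals a ≥ 0, β with φ(x) ≥ a·d(x,x₀) + β for all x ∈ X. Suppose η is nonnegative and nondecreasing on W = {d(x,y) : x,y ∈ X}, and there exist c > 0 and ε > 0 such that η(t) ≥ c·t for all t ∈ {t ≥ 0 : η(t) ≤ ε} ∩ W. Then every mapping T : X → X satisfying η(d(x,Tx)) ≤ φ(x) − φ(Tx) for all x ∈ X has a fixed point. -/
import Mathlib


/-- Li's Theorem 1, case (i). -/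
theorem li_theorem1_case_i {X : Type*} [MetricSpace X] [CompleteSpace X] [Nonempty X]
    (η : ℝ → ℝ) (hη0 : η 0 = 0)
    (φ : X → ℝ) (hlsc : LowerSemicontinuous φ)
    (x₀ : X) (a β : ℝ) (ha : 0 ≤ a)
    (hφ : ∀ x, a * dist x x₀ + β ≤ φ x)
    (hηnn : ∀ t ∈ {t : ℝ | ∃ x y : X, dist x y = t}, 0 ≤ η t)
    (hηmono : ∀ s ∈ {t : ℝ | ∃ x y : X, dist x y = t},
      ∀ t ∈ {t : ℝ | ∃ x y : X, dist x y = t}, s ≤ t → η s ≤ η t)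
    (c ε : ℝ) (hc : 0 < c) (hε : 0 < ε)
    (hgrow : ∀ t ∈ {t : ℝ | 0 ≤ t ∧ η t ≤ ε} ∩ {t : ℝ | ∃ x y : X, dist x y = t},
      c * t ≤ η t)
    (T : X → X) (hT : ∀ x, η (dist x (T x)) ≤ φ x - φ (T x)) :
    ∃ x, T x = x := by
  classical
  have hβ : ∀ x, β ≤ φ x := by
    intro x
    have h1 := hφ x
    have h2 : 0 ≤ a * dist x x₀ := mul_nonneg ha dist_nonneg
    linarith
  have hbdd : BddBelow (Set.range φ) := ⟨β, by rintro _ ⟨x, rfl⟩; exact hβ x⟩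
  set m := ⨅ x, φ x with hm
  have hmle : ∀ x, m ≤ φ x := fun x => ciInf_le hbdd x
  obtain ⟨x₁, hx₁⟩ : ∃ x, φ x < m + ε := exists_lt_of_ciInf_lt (by linarith : m < m + ε)
  have hW : ∀ x : X, dist x (T x) ∈ {t : ℝ | ∃ a b : X, dist a b = t} := fun x => ⟨x, T x, rfl⟩
  have hdec : ∀ x, φ (T x) ≤ φ x := by
    intro x
    have h1 := hT x
    have h2 := hηnn _ (hW x)
    linarith
  set A : Set X := {x | φ x ≤ φ x₁} with hA
  have hclosed : IsClosed A := hlsc.isClosed_preimage (φ x₁)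
  have hx₁A : x₁ ∈ A := by simp [hA]
  have hkey : ∀ x ∈ A, c * dist x (T x) ≤ φ x - φ (T x) := by
    intro x hx
    have h1 : η (dist x (T x)) ≤ φ x - φ (T x) := hT x
    have h2 : η (dist x (T x)) ≤ ε := by
      have h3 := hmle (T x)
      have h4 : φ x ≤ φ x₁ := hx
      linarith
    exact le_trans (hgrow _ ⟨⟨dist_nonneg, h2⟩, hW x⟩) h1
  have hTA : ∀ x ∈ A, T x ∈ A := fun x hx => le_trans (hdec x) hx
  haveI : CompleteSpace A := hclosed.completeSpace_coe
  let r : A → A → Prop := fun x y => c * dist (x : X) (y : X) ≤ φ x - φ y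
  have hrtrans : ∀ {p q s : A}, r p q → r q s → r p s := by
    intro p q s hpq hqs
    have htri := dist_triangle (p : X) (q : X) (s : X)
    simp only [r] at *
    nlinarith
  have hchain : ∀ cset : Set A, IsChain r cset → ∃ ub, ∀ a ∈ cset, r a ub := by
    intro cset hcc
    rcases cset.eq_empty_or_nonempty with h | ⟨w, hw⟩
    · exact ⟨⟨x₁, hx₁A⟩, by simp [h]⟩
    · have hbdd2 : BddBelow ((fun x : A => φ (x : X)) '' cset) :=
        ⟨β, by rintro _ ⟨x, hx, rfl⟩; exact hβ x⟩
      set m₀ := sInf ((fun x : A => φ (x : X)) '' cset) with hm₀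
      have hne : ((fun x : A => φ (x : X)) '' cset).Nonempty := ⟨_, ⟨w, hw, rfl⟩⟩
      have hm₀le : ∀ x ∈ cset, m₀ ≤ φ (x : X) := fun x hx => csInf_le hbdd2 ⟨x, hx, rfl⟩
      have hy : ∀ n : ℕ, ∃ y ∈ cset, φ (y : X) < m₀ + 1 / (n + 1) := by
        intro n
        have hpos : (0 : ℝ) < 1 / ((n : ℝ) + 1) := by positivity
        obtain ⟨_, ⟨y, hy, rfl⟩, hlt⟩ :=
          exists_lt_of_csInf_lt hne (by linarith : m₀ < m₀ + 1 / ((n : ℝ) + 1))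
        exact ⟨y, hy, hlt⟩
      choose y hymem hylt using hy
      have hpair : ∀ x ∈ cset, ∀ n : ℕ,
          c * dist (x : X) (y n : X) ≤ φ (x : X) - m₀ + 1 / (n + 1) := by
        intro x hx n
        have h0 : m₀ ≤ φ (x : X) := hm₀le x hx
        have hpos : (0 : ℝ) < 1 / ((n : ℝ) + 1) := by positivity
        rcases eq_or_ne x (y n) with h | h
        · have h0' := hm₀le _ (hymem n)
          rw [h, dist_self]
          nlinarith
        · rcases hcc hx (hymem n) h with hr | hr
          · have h1 : c * dist (x : X) (y n : X) ≤ φ (x : X) - φ (y n : X) := hr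
            have h2 := hm₀le _ (hymem n)
            linarith
          · have h1 : c * dist (y n : X) (x : X) ≤ φ (y n : X) - φ (x : X) := hr
            rw [dist_comm] at h1
            have h2 := hylt n
            linarith
      have hcauchy : CauchySeq y := by
        apply cauchySeq_of_le_tendsto_0 (fun N : ℕ => 2 / (c * (N + 1)))
        · intro n k N hn hk
          have h1 := hpair (y n) (hymem n) k
          have h2 := hylt n
          have h3 : (1 : ℝ) / ((n : ℝ) + 1) ≤ 1 / ((N : ℝ) + 1) := by
            apply one_div_le_one_div_of_le (by positivity)
            exact_mod_cast by omega
          have h4 : (1 : ℝ) / ((k : ℝ) + 1) ≤ 1 / ((N : ℝ) + 1) := by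
            apply one_div_le_one_div_of_le (by positivity)
            exact_mod_cast by omega
          have hdyk : c * dist (y n : X) (y k : X) ≤ 2 / ((N : ℝ) + 1) := by
            have : (2 : ℝ) / ((N : ℝ) + 1) = 1 / ((N : ℝ) + 1) + 1 / ((N : ℝ) + 1) := by ring
            rw [this]
            linarith
          rw [Subtype.dist_eq]
          rw [le_div_iff₀ (by positivity)]
          rw [le_div_iff₀ (by positivity)] at hdyk
          nlinarith [dist_nonneg (x := (y n : X)) (y := (y k : X))]
        · have h1 : Filter.Tendsto (fun n : ℕ => 1 / ((n : ℝ) + 1)) Filter.atTop (nhds 0) :=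
            tendsto_one_div_add_atTop_nhds_zero_nat
          have h2 := h1.const_mul (2 / c)
          rw [mul_zero] at h2
          convert h2 using 2 with n
          have hc' : c ≠ 0 := ne_of_gt hc
          field_simp
      obtain ⟨z, hz⟩ := cauchySeq_tendsto_of_complete hcauchy
      have hzv : Filter.Tendsto (fun n => (y n : X)) Filter.atTop (nhds (z : X)) :=
        (continuous_subtype_val.tendsto z).comp hz
      have hdistz : Filter.Tendsto (fun n => dist (y n : X) (z : X)) Filter.atTop (nhds 0) :=
        tendsto_iff_dist_tendsto_zero.mp hzv
      have h1div : Filter.Tendsto (fun n : ℕ => 1 / ((n : ℝ) + 1)) Filter.atTop (nhds 0) :=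
        tendsto_one_div_add_atTop_nhds_zero_nat
      have hφz : φ (z : X) ≤ m₀ := by
        by_contra hcon
        push_neg at hcon
        obtain ⟨t, ht1, ht2⟩ := exists_between hcon
        have hev1 := hzv.eventually (hlsc (z : X) t ht2)
        have hev2 : ∀ᶠ n : ℕ in Filter.atTop, 1 / ((n : ℝ) + 1) < t - m₀ :=
          h1div.eventually_lt_const (by linarith)
        obtain ⟨n, hn1, hn2⟩ := (hev1.and hev2).exists
        have := hylt n
        linarith
      refine ⟨z, ?_⟩
      intro x hx
      show c * dist (x : X) (z : X) ≤ φ (x : X) - φ (z : X)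
      have key : ∀ n : ℕ, c * dist (x : X) (z : X) ≤
          φ (x : X) - m₀ + 1 / (n + 1) + c * dist (y n : X) (z : X) := by
        intro n
        have h1 := hpair x hx n
        have htri := dist_triangle (x : X) (y n : X) (z : X)
        nlinarith
      have hlim : Filter.Tendsto
          (fun n : ℕ => φ (x : X) - m₀ + 1 / ((n : ℝ) + 1) + c * dist (y n : X) (z : X))
          Filter.atTop (nhds (φ (x : X) - m₀)) := by
        have h2 := hdistz.const_mul c
        rw [mul_zero] at h2
        have h3 := (tendsto_const_nhds (x := φ (x : X) - m₀) (f := Filter.atTop (α := ℕ))).add h1div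
        rw [add_zero] at h3
        have h4 := h3.add h2
        rw [add_zero] at h4
        exact h4
      have hle : c * dist (x : X) (z : X) ≤ φ (x : X) - m₀ :=
        ge_of_tendsto hlim (Filter.Eventually.of_forall key)
      linarith
  obtain ⟨mx, hmx⟩ := exists_maximal_of_chains_bounded hchain (fun {p q s} => hrtrans)
  refine ⟨mx, ?_⟩
  have hTmem : T (mx : X) ∈ A := hTA _ mx.2
  have h1 : r mx ⟨T (mx : X), hTmem⟩ := hkey _ mx.2
  have h2 : r ⟨T (mx : X), hTmem⟩ mx := hmx _ h1
  have hd : dist (mx : X) (T (mx : X)) = 0 := by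
    simp only [r] at h1 h2
    rw [dist_comm (T (mx : X))] at h2
    have hnn : 0 ≤ dist (mx : X) (T (mx : X)) := dist_nonneg
    nlinarith
  exact (eq_of_dist_eq_zero hd).symm
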